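/- Let m₁, m₂ be nonzero integers with |m₁| ≥ |m₂| ≥ 1, m ∈ [1,2], and suppose |m₁| − |m₂| ≤ K for some K ≥ 0. Then |r_{m₁}(m) − r_{m₂}(m)| ≤ 2K/(⟨m₁⟩⟨m₂⟩), where r_j(m) = √(j²+m) − |j| and ⟨n⟩ = max{1,|n|}. -/

import Mathlib

open Set Real

set_option maxHeartbeats 1000000 in
/-- If |m₁| ≥ |m₂| ≥ 1 are nonzero integers with |m₁| − |m₂| ≤ K, K ≥ 0, and
m ∈ [1,2], then |r_{m₁}(m) − r_{m₂}(m)| ≤ 2K/(⟨m₁⟩⟨m₂⟩), where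
r_j(m) = √(j²+m) − |j| and ⟨n⟩ = max{1,|n|}. -/
theorem stmt10 (m₁ m₂ : ℤ) (m K : ℝ) (hm : m ∈ Set.Icc (1:ℝ) 2)
    (h2 : 1 ≤ |m₂|) (h12 : |m₂| ≤ |m₁|) (hK : 0 ≤ K)
    (hdiff : (|m₁| : ℝ) - (|m₂| : ℝ) ≤ K) :
    |(Real.sqrt ((m₁:ℝ)^2 + m) - |(m₁:ℝ)|) - (Real.sqrt ((m₂:ℝ)^2 + m) - |(m₂:ℝ)|)|
      ≤ 2 * K / (max 1 |(m₁:ℝ)| * max 1 |(m₂:ℝ)|) := by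
  obtain ⟨hm1, hm2⟩ := hm
  set a := |(m₁:ℝ)| with ha
  set b := |(m₂:ℝ)| with hb
  have hb1 : (1:ℝ) ≤ b := by
    rw [hb, ← Int.cast_abs]; exact_mod_cast h2
  have hab : b ≤ a := by
    rw [ha, hb, ← Int.cast_abs, ← Int.cast_abs]; exact_mod_cast h12
  have ha1 : (1:ℝ) ≤ a := hb1.trans hab
  have hdiff' : a - b ≤ K := hdiff
  have hmaxa : max 1 a = a := max_eq_right ha1
  have hmaxb : max 1 b = b := max_eq_right hb1
  rw [hmaxa, hmaxb]
  have hsa : (m₁:ℝ)^2 + m = a^2 + m := by rw [ha, sq_abs]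
  have hsb : (m₂:ℝ)^2 + m = b^2 + m := by rw [hb, sq_abs]
  rw [hsa, hsb]
  set Sa := Real.sqrt (a^2 + m) with hSa
  set Sb := Real.sqrt (b^2 + m) with hSb
  have hSa2 : Sa^2 = a^2 + m := Real.sq_sqrt (by nlinarith)
  have hSb2 : Sb^2 = b^2 + m := Real.sq_sqrt (by nlinarith)
  have hSa0 : 0 ≤ Sa := Real.sqrt_nonneg _
  have hSb0 : 0 ≤ Sb := Real.sqrt_nonneg _
  have haSa : a ≤ Sa := by
    nlinarith [hSa2, hSa0]
  have hbSb : b ≤ Sb := by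
    nlinarith [hSb2, hSb0]
  clear_value Sa Sb a b
  have hapos : (0:ℝ) < a := by linarith
  have hbpos : (0:ℝ) < b := by linarith
  have habpos : (0:ℝ) < a * b := mul_pos hapos hbpos
  rw [abs_le]
  constructor
  · -- lower bound: -(2K/(ab)) ≤ (Sa - a) - (Sb - b)
    -- key: (Sb - b - (Sa - a)) * (a*b) ≤ 2K
    -- identity: (fb - fa)(Sa + Sb) = (a - b)(fa + fb)
    have hid : ((Sb - b) - (Sa - a)) * (Sa + Sb) = (a - b) * ((Sa - a) + (Sb - b)) := by
      linear_combination hSb2 - hSa2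
    have hfa : (Sa - a) * (Sa + a) = m := by linear_combination hSa2
    have hfb : (Sb - b) * (Sb + b) = m := by linear_combination hSb2
    have hfa0 : 0 ≤ Sa - a := by linarith
    have hfb0 : 0 ≤ Sb - b := by linarith
    -- fa * a ≤ m/2, fb * b ≤ m/2
    have h1 : (Sa - a) * (2*a) ≤ m := by nlinarith [hfa, hfa0]
    have h2' : (Sb - b) * (2*b) ≤ m := by nlinarith [hfb, hfb0]
    -- (fa + fb) * a * b ≤ Sa + Sb
    have h3 : ((Sa - a) + (Sb - b)) * (a * b) ≤ Sa + Sb := by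
      nlinarith [h1, h2', mul_le_mul_of_nonneg_left h1 hbpos.le,
        mul_le_mul_of_nonneg_left h2' hapos.le]
    have hS0 : 0 < Sa + Sb := by linarith
    have key : ((Sb - b) - (Sa - a)) * (a * b) ≤ K := by
      rw [← mul_le_mul_iff_of_pos_right hS0]
      calc ((Sb - b) - (Sa - a)) * (a * b) * (Sa + Sb)
          = (a - b) * (((Sa - a) + (Sb - b)) * (a * b)) := by nlinarith [hid]
        _ ≤ K * (Sa + Sb) := by
            have h4 : (a - b) * (((Sa - a) + (Sb - b)) * (a * b)) ≤ (a - b) * (Sa + Sb) :=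
              mul_le_mul_of_nonneg_left h3 (by linarith)
            have h5 : (a - b) * (Sa + Sb) ≤ K * (Sa + Sb) :=
              mul_le_mul_of_nonneg_right hdiff' hS0.le
            linarith
    have hfin : (Sb - b) - (Sa - a) ≤ 2 * K / (a * b) := by
      rw [le_div_iff₀ habpos]; nlinarith [key]
    linarith [hfin]
  · -- upper bound: (Sa - a) - (Sb - b) ≤ 2K/(ab)
    have hmono : (Sa - a) - (Sb - b) ≤ 0 := by
      have hid2 : (Sa - Sb) * (Sa + Sb) = (a - b) * (a + b) := by
        linear_combination hSa2 - hSb2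
      have hSab : Sa - Sb ≤ a - b := by
        nlinarith [hid2, haSa, hbSb]
      linarith
    have : (0:ℝ) ≤ 2 * K / (a * b) := by positivity
    linarith
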